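/- Let I be a type, E₁ : Set I, E₊ : Set (I × I × I), E× : Set (I × I × I), let ε : ℝ with ε > 0, and let η, η'' : I → ℝ satisfy: η i = ε for all i ∈ E₁; η i + η j = η k for all (i,j,k) ∈ E₊; and η i * η j = η'' k together with ε * η k = η'' k for all (i,j,k) ∈ E×. Then the assignment ξ defined by ξ i := η i / ε satisfies ξ i = 1 for all i ∈ E₁, ξ i + ξ j = ξ k for all (i,j,k) ∈ E₊, and ξ i * ξ j = ξ k for all (i,j,k) ∈ E×. -/

import Mathlib

theorem scaling_backward (I : Type*) (E₁ : Set I) (Eadd Emul : Set (I × I × I))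
    (ε : ℝ) (hε : 0 < ε) (η η'' : I → ℝ)
    (hone : ∀ i ∈ E₁, η i = ε)
    (hadd : ∀ t ∈ Eadd, η t.1 + η t.2.1 = η t.2.2)
    (hmul : ∀ t ∈ Emul, η t.1 * η t.2.1 = η'' t.2.2 ∧ ε * η t.2.2 = η'' t.2.2)
    (ξ : I → ℝ) (hξ : ∀ i, ξ i = η i / ε) :
    (∀ i ∈ E₁, ξ i = 1) ∧
      (∀ t ∈ Eadd, ξ t.1 + ξ t.2.1 = ξ t.2.2) ∧
      (∀ t ∈ Emul, ξ t.1 * ξ t.2.1 = ξ t.2.2) := by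
  have hε' := hε.ne'
  refine ⟨fun i hi => ?_, fun t ht => ?_, fun t ht => ?_⟩
  · rw [hξ, hone i hi, div_self hε']
  · rw [hξ, hξ, hξ, ← add_div, hadd t ht]
  · obtain ⟨h1, h2⟩ := hmul t ht
    rw [hξ, hξ, hξ]
    field_simp
    rw [h1, ← h2]
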